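/- Let X = ℝ² equipped with the supremum norm ‖(a,b)‖ = max(|a|, |b|), and let Ω = {(z₁, z₂) ∈ ℝ² : z₂ < 0} be the lower half-plane, so that d((z₁,z₂)) = −z₂. Then for every t ∈ [−1, 1], the quasihyperbolic distance from x = (0, −1) to (t, −2) equals log 2: k_Ω((0,−1), (t,−2)) = log 2. In particular the segment from (−1,−2) to (1,−2) is contained in the quasihyperbolic sphere of radius log 2 centered at (0,−1). -/

import Mathlib

/-- The quasihyperbolic length of a path `γ` on `[a,b]` in a domain `Ω`:
`ℓ_k(γ) = ∫ₐᵇ ‖γ′(t)‖ / d(γ(t)) dt`, where `d(x) = dist(x, X ∖ Ω)`. -/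
noncomputable def qhLength {X : Type*} [NormedAddCommGroup X] [NormedSpace ℝ X]
    (Ω : Set X) (γ : ℝ → X) (a b : ℝ) : ℝ :=
  ∫ t in a..b, ‖deriv γ t‖ / Metric.infDist (γ t) Ωᶜ

/-- The quasihyperbolic distance on a domain `Ω`: the infimum of quasihyperbolic lengths
over continuously differentiable paths in `Ω` joining the two points. -/
noncomputable def qhDist {X : Type*} [NormedAddCommGroup X] [NormedSpace ℝ X]
    (Ω : Set X) (x y : X) : ℝ :=
  sInf ((fun γ : ℝ → X => qhLength Ω γ 0 1) ''
    {γ | ContDiff ℝ 1 γ ∧ Set.MapsTo γ (Set.Icc 0 1) Ω ∧ γ 0 = x ∧ γ 1 = y})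

/-- Distance to the complement of the lower half-plane in the sup norm. -/
lemma QH.infDist_halfPlane (z : Fin 2 → ℝ) (hz : z 1 < 0) :
    Metric.infDist z {z : Fin 2 → ℝ | z 1 < 0}ᶜ = -z 1 := by
  apply le_antisymm
  · have hw : (Function.update z 1 0) ∈ {z : Fin 2 → ℝ | z 1 < 0}ᶜ := by
      simp [Function.update]
    refine le_trans (Metric.infDist_le_dist_of_mem hw) ?_
    rw [dist_pi_le_iff (by linarith)]
    intro i
    fin_cases i
    · simp [Function.update]
      linarith
    · simp [Function.update, Real.dist_eq, abs_of_neg hz]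
  · rw [Metric.infDist_eq_iInf]
    have hne : Nonempty ({z : Fin 2 → ℝ | z 1 < 0}ᶜ : Set (Fin 2 → ℝ)) :=
      ⟨⟨0, by simp⟩⟩
    refine le_ciInf fun ⟨w, hw⟩ => ?_
    have hw1 : 0 ≤ w 1 := by simpa using hw
    calc -z 1 ≤ |z 1 - w 1| := by rw [abs_sub_comm]; refine le_trans ?_ (le_abs_self _); linarith
    _ = dist (z 1) (w 1) := (Real.dist_eq _ _).symm
    _ ≤ dist z w := dist_le_pi_dist z w 1

/-- The linear witness path has quasihyperbolic length exactly `log 2`. -/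
lemma QH.upper (t : ℝ) (ht : t ∈ Set.Icc (-1:ℝ) 1) :
    qhLength {z : Fin 2 → ℝ | z 1 < 0} (fun s => ![t * s, -1 - s]) 0 1 = Real.log 2 := by
  set γ : ℝ → (Fin 2 → ℝ) := fun s => ![t * s, -1 - s] with hγdef
  have hd : ∀ s : ℝ, HasDerivAt γ ![t, -1] s := by
    intro s
    rw [hasDerivAt_pi]
    intro i
    fin_cases i
    · show HasDerivAt (fun x => t * x) t s
      simpa using (hasDerivAt_id s).const_mul t
    · show HasDerivAt (fun x => -1 - x) (-1) s
      exact (hasDerivAt_id s).const_sub (-1 : ℝ)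
  have hderiv : ∀ s : ℝ, deriv γ s = ![t, -1] := fun s => (hd s).deriv
  have hnorm : ‖(![t, -1] : Fin 2 → ℝ)‖ = 1 := by
    apply le_antisymm
    · rw [pi_norm_le_iff_of_nonneg (by norm_num)]
      intro i
      fin_cases i
      · simpa [Real.norm_eq_abs] using abs_le.mpr ⟨ht.1, ht.2⟩
      · simp
    · calc (1:ℝ) = ‖(![t,-1] : Fin 2 → ℝ) 1‖ := by simp
        _ ≤ _ := norm_le_pi_norm _ 1
  have hEq : Set.EqOn (fun s => ‖deriv γ s‖ / Metric.infDist (γ s) {z : Fin 2 → ℝ | z 1 < 0}ᶜ)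
      (fun s => (1 + s)⁻¹) (Set.uIcc 0 1) := by
    intro s hs
    rw [Set.uIcc_of_le (by norm_num)] at hs
    have h1 : γ s 1 < 0 := by simp [hγdef]; linarith [hs.1]
    simp only [hderiv, hnorm, QH.infDist_halfPlane _ h1]
    have : -γ s 1 = 1 + s := by simp [hγdef]; ring
    rw [this, one_div]
  rw [qhLength, intervalIntegral.integral_congr hEq]
  have h2 : ∫ s in (0:ℝ)..1, (1 + s)⁻¹ = Real.log (1 + 1) - Real.log (1 + 0) := by
    apply intervalIntegral.integral_eq_sub_of_hasDerivAt (f := fun s => Real.log (1 + s))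
    · intro s hs
      rw [Set.uIcc_of_le (by norm_num)] at hs
      have hpos : (0:ℝ) < 1 + s := by linarith [hs.1]
      simpa using ((hasDerivAt_id s).const_add (1:ℝ)).log hpos.ne'
    · apply ContinuousOn.intervalIntegrable
      intro s hs
      rw [Set.uIcc_of_le (by norm_num)] at hs
      have hpos : (0:ℝ) < 1 + s := by linarith [hs.1]
      exact ((continuousOn_const.add continuousOn_id).inv₀ (fun x hx => by
        rw [Set.uIcc_of_le (by norm_num)] at hx
        have : (0:ℝ) < 1 + x := by linarith [hx.1]
        exact this.ne')) s (by rwa [Set.uIcc_of_le (by norm_num)])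
  rw [h2]
  norm_num

/-- Every admissible path from `(0,-1)` to `(t,-2)` has quasihyperbolic length ≥ `log 2`. -/
lemma QH.lower (t : ℝ) (γ : ℝ → (Fin 2 → ℝ)) (hγ : ContDiff ℝ 1 γ)
    (hmap : Set.MapsTo γ (Set.Icc 0 1) {z : Fin 2 → ℝ | z 1 < 0})
    (h0 : γ 0 = ![0, -1]) (h1 : γ 1 = ![t, -2]) :
    Real.log 2 ≤ qhLength {z : Fin 2 → ℝ | z 1 < 0} γ 0 1 := by
  set f : ℝ → ℝ := fun s => -(γ s 1) with hf
  have hdiff : Differentiable ℝ γ := hγ.differentiable one_ne_zero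
  have hfd : ∀ s, HasDerivAt f (-(deriv γ s 1)) s := fun s =>
    ((hasDerivAt_pi.mp (hdiff s).hasDerivAt) 1).neg
  have hfpos : ∀ s ∈ Set.Icc (0:ℝ) 1, 0 < f s := fun s hs => by
    have h := hmap hs
    simp only [Set.mem_setOf_eq] at h
    simp only [hf]
    linarith
  have hcont : Continuous (deriv γ) := hγ.continuous_deriv le_rfl
  have hcontf : Continuous f := ((continuous_apply 1).comp hγ.continuous).neg
  have hne : ∀ s ∈ Set.uIcc (0:ℝ) 1, f s ≠ 0 := fun s hs =>
    (hfpos s (by rwa [Set.uIcc_of_le (by norm_num)] at hs)).ne'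
  have hgint : IntervalIntegrable (fun s => (-(deriv γ s 1)) / f s) MeasureTheory.volume 0 1 := by
    apply ContinuousOn.intervalIntegrable
    exact (((continuous_apply 1).comp hcont).neg.continuousOn).div hcontf.continuousOn hne
  have hhint : IntervalIntegrable (fun s => ‖deriv γ s‖ / f s) MeasureTheory.volume 0 1 := by
    apply ContinuousOn.intervalIntegrable
    exact (hcont.norm.continuousOn).div hcontf.continuousOn hne
  have hFTC : ∫ s in (0:ℝ)..1, (-(deriv γ s 1)) / f s = Real.log (f 1) - Real.log (f 0) := by
    apply intervalIntegral.integral_eq_sub_of_hasDerivAt (f := fun s => Real.log (f s))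
    · intro s hs
      exact (hfd s).log (hne s hs)
    · exact hgint
  have hval : Real.log (f 1) - Real.log (f 0) = Real.log 2 := by
    simp [hf, h0, h1]
  have hcongr : qhLength {z : Fin 2 → ℝ | z 1 < 0} γ 0 1
      = ∫ s in (0:ℝ)..1, ‖deriv γ s‖ / f s := by
    apply intervalIntegral.integral_congr
    intro s hs
    rw [Set.uIcc_of_le (by norm_num)] at hs
    have h := hmap hs
    simp only [Set.mem_setOf_eq] at h
    simp [QH.infDist_halfPlane _ h, hf]
  rw [hcongr, ← hval, ← hFTC]
  apply intervalIntegral.integral_mono_on (by norm_num) hgint hhint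
  intro s hs
  have h1' : -(deriv γ s 1) ≤ ‖deriv γ s‖ := by
    refine le_trans (neg_le_abs _) ?_
    simpa [Real.norm_eq_abs] using norm_le_pi_norm (deriv γ s) 1
  have := hfpos s hs
  gcongr

/-- In `ℝ²` with the supremum norm (here `Fin 2 → ℝ` with the sup norm) and the lower
half-plane `Ω = {z : z₂ < 0}`, the quasihyperbolic distance from `(0,−1)` to `(t,−2)`
equals `log 2` for every `t ∈ [−1,1]`: the segment from `(−1,−2)` to `(1,−2)` lies on
the quasihyperbolic sphere of radius `log 2` centered at `(0,−1)`. -/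
theorem qhDist_halfPlane_sup_segment_on_sphere
    (t : ℝ) (ht : t ∈ Set.Icc (-1 : ℝ) 1) :
    qhDist {z : Fin 2 → ℝ | z 1 < 0} ![0, -1] ![t, -2] = Real.log 2 := by
  set γ₀ : ℝ → (Fin 2 → ℝ) := fun s => ![t * s, -1 - s] with hγ₀
  have hCD : ContDiff ℝ 1 γ₀ := by
    rw [contDiff_pi]
    intro i
    fin_cases i
    · simpa [hγ₀] using (contDiff_const.mul contDiff_id : ContDiff ℝ 1 fun s : ℝ => t * s)
    · simpa [hγ₀] using (contDiff_const.sub contDiff_id : ContDiff ℝ 1 fun s : ℝ => -1 - s)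
  have hmap : Set.MapsTo γ₀ (Set.Icc 0 1) {z : Fin 2 → ℝ | z 1 < 0} := by
    intro s hs
    simp only [hγ₀, Set.mem_setOf_eq, Matrix.cons_val_one, Matrix.head_cons, Matrix.cons_val_zero]
    linarith [hs.1]
  have h0 : γ₀ 0 = ![0, -1] := by
    funext i
    fin_cases i <;> simp [hγ₀]
  have h1 : γ₀ 1 = ![t, -2] := by
    funext i
    fin_cases i <;> simp [hγ₀] <;> norm_num
  have hmem : Real.log 2 ∈ ((fun γ : ℝ → (Fin 2 → ℝ) => qhLength {z : Fin 2 → ℝ | z 1 < 0} γ 0 1) ''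
      {γ | ContDiff ℝ 1 γ ∧ Set.MapsTo γ (Set.Icc 0 1) {z : Fin 2 → ℝ | z 1 < 0} ∧
        γ 0 = ![0, -1] ∧ γ 1 = ![t, -2]}) :=
    ⟨γ₀, ⟨hCD, hmap, h0, h1⟩, QH.upper t ht⟩
  have hlb : ∀ x ∈ ((fun γ : ℝ → (Fin 2 → ℝ) => qhLength {z : Fin 2 → ℝ | z 1 < 0} γ 0 1) ''
      {γ | ContDiff ℝ 1 γ ∧ Set.MapsTo γ (Set.Icc 0 1) {z : Fin 2 → ℝ | z 1 < 0} ∧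
        γ 0 = ![0, -1] ∧ γ 1 = ![t, -2]}), Real.log 2 ≤ x := by
    rintro x ⟨γ, ⟨hc, hm, hg0, hg1⟩, rfl⟩
    exact QH.lower t γ hc hm hg0 hg1
  exact le_antisymm (csInf_le ⟨Real.log 2, hlb⟩ hmem) (le_csInf ⟨_, hmem⟩ hlb)
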